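/- The language L₂'' = { aⁿ bⁿ c²ⁿ : n ∈ ℕ, n ≥ 1 } over the alphabet {a,b,c} is CFL-immune; that is, L₂'' is infinite and no infinite subset of L₂'' is a context-free language. -/

import Mathlib

/-- `L` is CFL-immune: `L` is infinite and no infinite subset of `L` is context-free. -/
def CFLImmune {T : Type} (L : Language T) : Prop :=
  Set.Infinite (L : Set (List T)) ∧
    ∀ M : Language T, M ≤ L → Set.Infinite (M : Set (List T)) → ¬ M.IsContextFree

/-- L₂'' = { aⁿ bⁿ c²ⁿ : n ≥ 1 } over the three-letter alphabet {a,b,c} (as `Fin 3`). -/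
def L2'' : Language (Fin 3) :=
  {s | ∃ n : ℕ, 1 ≤ n ∧
    s = List.replicate n 0 ++ List.replicate n 1 ++ List.replicate (2 * n) 2}

open ContextFreeGrammar

universe uN uT
variable {T : Type uT}

namespace CFLPump

variable {g : ContextFreeGrammar.{uT} T}

/-- Counted derivations. -/
inductive DerivesIn (g : ContextFreeGrammar.{uT} T) :
    ℕ → List (Symbol T g.NT) → List (Symbol T g.NT) → Prop
  | refl (u : List (Symbol T g.NT)) : DerivesIn g 0 u u
  | head {n u v w} (huv : g.Produces u v) (hvw : DerivesIn g n v w) : DerivesIn g (n + 1) u w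

lemma DerivesIn.derives {n u v} (h : DerivesIn g n u v) : g.Derives u v := by
  induction h with
  | refl => rfl
  | head huv _ ih => exact huv.trans_derives ih

lemma derives_iff_derivesIn {u v} : g.Derives u v ↔ ∃ n, DerivesIn g n u v := by
  constructor
  · intro h
    induction h using Relation.ReflTransGen.head_induction_on with
    | refl => exact ⟨0, .refl _⟩
    | head huv _ ih => exact ⟨ih.choose + 1, .head huv ih.choose_spec⟩
  · rintro ⟨n, h⟩; exact h.derives

lemma DerivesIn.trans {m n u v w} (h₁ : DerivesIn g m u v) (h₂ : DerivesIn g n v w) :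
    DerivesIn g (m + n) u w := by
  induction h₁ with
  | refl => simpa using h₂
  | head huv _ ih => exact (Nat.succ_add _ n) ▸ .head huv (ih h₂)

lemma DerivesIn.append_left {n u v} (h : DerivesIn g n u v) (p : List (Symbol T g.NT)) :
    DerivesIn g n (p ++ u) (p ++ v) := by
  induction h with
  | refl => exact .refl _
  | head huv _ ih => exact .head (huv.append_left p) ih

lemma DerivesIn.append_right {n u v} (h : DerivesIn g n u v) (p : List (Symbol T g.NT)) :
    DerivesIn g n (u ++ p) (v ++ p) := by
  induction h with
  | refl => exact .refl _
  | head huv _ ih => exact .head (huv.append_right p) ih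


/-- Abbreviation: the terminal string `w` as a sentential form. -/
abbrev mapT (g : ContextFreeGrammar.{uT} T) (w : List T) : List (Symbol T g.NT) :=
  w.map Symbol.terminal

lemma no_rewrite_terminal {r : ContextFreeRule T g.NT} {w : List T} {v} 
    (h : r.Rewrites (mapT g w) v) : False := by
  obtain ⟨p, q, hpq, -⟩ := h.exists_parts
  have : Symbol.nonterminal r.input ∈ mapT g w := by
    rw [hpq]; simp
  simp [mapT] at this

lemma derivesIn_terminal {n w v} (h : DerivesIn g n (mapT g w) v) : v = mapT g w ∧ n = 0 := by
  cases h with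
  | refl => exact ⟨rfl, rfl⟩
  | head huv _ => obtain ⟨r, -, hr⟩ := huv; exact absurd hr (fun h => no_rewrite_terminal h)

lemma rewrites_append {r : ContextFreeRule T g.NT} :
    ∀ {s₁ s₂ v : List (Symbol T g.NT)}, r.Rewrites (s₁ ++ s₂) v →
      (∃ s₁', r.Rewrites s₁ s₁' ∧ v = s₁' ++ s₂) ∨ (∃ s₂', r.Rewrites s₂ s₂' ∧ v = s₁ ++ s₂') := by
  intro s₁
  induction s₁ with
  | nil => intro s₂ v h; exact Or.inr ⟨v, by simpa using h, by simp⟩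
  | cons a t ih =>
    intro s₂ v h
    cases h with
    | head s => exact Or.inl ⟨r.output ++ t, ContextFreeRule.Rewrites.head t, by simp⟩
    | cons _ hxs =>
      rcases ih hxs with ⟨s₁', h₁, rfl⟩ | ⟨s₂', h₂, rfl⟩
      · exact Or.inl ⟨a :: s₁', h₁.cons a, by simp⟩
      · exact Or.inr ⟨s₂', h₂, by simp⟩

lemma DerivesIn.split {n} : ∀ {s₁ s₂ : List (Symbol T g.NT)} {w : List T},
    DerivesIn g n (s₁ ++ s₂) (mapT g w) →
    ∃ n₁ n₂ w₁ w₂, n₁ + n₂ = n ∧ w = w₁ ++ w₂ ∧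
      DerivesIn g n₁ s₁ (mapT g w₁) ∧ DerivesIn g n₂ s₂ (mapT g w₂) := by
  induction n using Nat.strong_induction_on with
  | _ n IH =>
    intro s₁ s₂ w h
    generalize hW : mapT g w = W at h
    cases h with
    | refl =>
      rw [List.map_eq_append_iff] at hW
      obtain ⟨w₁, w₂, rfl, h₁, h₂⟩ := hW
      exact ⟨0, 0, w₁, w₂, rfl, rfl, h₁ ▸ .refl _, h₂ ▸ .refl _⟩
    | @head n' u v w' huv hvw =>
      subst hW
      obtain ⟨r, hrg, hr⟩ := huv
      rcases rewrites_append hr with ⟨s₁', h₁, rfl⟩ | ⟨s₂', h₂, rfl⟩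
      · obtain ⟨n₁, n₂, w₁, w₂, hn, hw, d₁, d₂⟩ := IH n' (Nat.lt_succ_self _) hvw
        exact ⟨n₁ + 1, n₂, w₁, w₂, by omega, hw, .head ⟨r, hrg, h₁⟩ d₁, d₂⟩
      · obtain ⟨n₁, n₂, w₁, w₂, hn, hw, d₁, d₂⟩ := IH n' (Nat.lt_succ_self _) hvw
        exact ⟨n₁, n₂ + 1, w₁, w₂, by omega, hw, d₁, .head ⟨r, hrg, h₂⟩ d₂⟩


lemma DerivesIn.head_nt {n A} {w : List T} (h : DerivesIn g n [Symbol.nonterminal A] (mapT g w)) :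
    ∃ r m, n = m + 1 ∧ r ∈ g.rules ∧ r.input = A ∧ DerivesIn g m r.output (mapT g w) := by
  generalize hW : mapT g w = W at h
  cases h with
  | refl =>
    exfalso
    have : Symbol.nonterminal A ∈ mapT g w := by rw [hW]; simp
    simp [mapT] at this
  | @head n' u v w' huv hvw =>
    obtain ⟨r, hrg, hr⟩ := huv
    obtain ⟨p, q, hpq, rfl⟩ := hr.exists_parts
    have hp : p = [] ∧ (Symbol.nonterminal r.input : Symbol T g.NT) = Symbol.nonterminal A ∧ q = [] := by
      have := hpq
      rcases p with _ | ⟨a, p⟩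
      · rcases q with _ | ⟨b, q⟩
        · simpa using this.symm
        · simp at this
      · rcases p with _ | ⟨c, p⟩ <;> simp at this <;> tauto
    obtain ⟨rfl, hA, rfl⟩ := hp
    refine ⟨r, n', rfl, hrg, by injection hA, by simpa using hvw⟩

/-- `Frame g A B a u v`: `A` derives `u B v` (with terminal context) in `a` steps. -/
def Frame (g : ContextFreeGrammar.{uT} T) (A B : g.NT) (a : ℕ) (u v : List T) : Prop :=
  DerivesIn g a [Symbol.nonterminal A] (mapT g u ++ [Symbol.nonterminal B] ++ mapT g v)

lemma Frame.refl (A : g.NT) : Frame g A A 0 [] [] := DerivesIn.refl _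

lemma Frame.comp {A B C a b u v x y} (h₁ : Frame g A B a u v) (h₂ : Frame g B C b x y) :
    Frame g A C (a + b) (u ++ x) (y ++ v) := by
  unfold Frame at *
  have h₂' := (h₂.append_left (mapT g u)).append_right (mapT g v)
  have := h₁.trans h₂'
  simpa [mapT, List.append_assoc] using this

lemma Frame.fill {A B a c u v wB} (h₁ : Frame g A B a u v)
    (h₂ : DerivesIn g c [Symbol.nonterminal B] (mapT g wB)) :
    DerivesIn g (a + c) [Symbol.nonterminal A] (mapT g (u ++ wB ++ v)) := by
  have h₂' := (h₂.append_left (mapT g u)).append_right (mapT g v)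
  have := h₁.trans h₂'
  simpa [mapT, List.append_assoc] using this


lemma map_terminal_inj {w₁ w₂ : List T} (h : mapT g w₁ = mapT g w₂) : w₁ = w₂ := by
  exact List.map_injective_iff.mpr (fun a b hab => by injection hab) h

lemma find_big_piece : ∀ (s : List (Symbol T g.NT)) {n : ℕ} {w : List T} {p : ℕ}, 1 ≤ p →
    DerivesIn g n s (mapT g w) → s.length * p < w.length →
    ∃ C x y wC a c, w = x ++ wC ++ y ∧ p < wC.length ∧ a + c = n ∧
      DerivesIn g a s (mapT g x ++ [Symbol.nonterminal C] ++ mapT g y) ∧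
      DerivesIn g c [Symbol.nonterminal C] (mapT g wC) := by
  intro s
  induction s with
  | nil =>
    intro n w p hp h hlen
    obtain ⟨hw, -⟩ := derivesIn_terminal (w := []) h
    have : w = [] := map_terminal_inj hw
    subst this
    simp at hlen
  | cons sym s' ih =>
    intro n w p hp h hlen
    obtain ⟨n₁, n₂, w₁, w₂, hn, rfl, d₁, d₂⟩ := DerivesIn.split (s₁ := [sym]) h
    have hlen' : (s'.length + 1) * p < w₁.length + w₂.length := by
      simpa [Nat.add_comm, List.length_append] using hlen
    rw [Nat.succ_mul] at hlen'
    cases sym with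
    | terminal t =>
      obtain ⟨hw₁, hn₁⟩ := derivesIn_terminal (w := [t]) (by simpa [mapT] using d₁)
      have hw₁' : w₁ = [t] := map_terminal_inj hw₁
      subst hw₁' hn₁
      obtain ⟨C, x, y, wC, a, c, hdec, hbig, hac, dctx, dC⟩ :=
        ih hp d₂ (by have e1 : ([t] : List T).length = 1 := rfl; omega)
      refine ⟨C, t :: x, y, wC, a, c, by simp [hdec], hbig, by omega, ?_, dC⟩
      simpa [mapT] using dctx.append_left [Symbol.terminal t]
    | nonterminal D =>
      by_cases hbig₁ : p < w₁.length
      · refine ⟨D, [], w₂, w₁, n₂, n₁, by simp, hbig₁, by omega, ?_, d₁⟩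
        simpa [mapT] using d₂.append_left [Symbol.nonterminal D]
      · obtain ⟨C, x, y, wC, a, c, hdec, hbig, hac, dctx, dC⟩ :=
          ih hp d₂ (by omega)
        refine ⟨C, w₁ ++ x, y, wC, n₁ + a, c, by simp [hdec], hbig, by omega, ?_, dC⟩
        have step1 : DerivesIn g n₁ (Symbol.nonterminal D :: s') (mapT g w₁ ++ s') := by
          simpa using d₁.append_right s'
        have step2 := dctx.append_left (mapT g w₁)
        simpa [mapT, List.append_assoc] using step1.trans step2


/-- Nonterminals that head some rule. -/
noncomputable def nts (g : ContextFreeGrammar.{uT} T) : Finset g.NT :=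
  @Finset.image _ _ (Classical.decEq _) (·.input) g.rules

lemma mem_nts {A : g.NT} : A ∈ nts g ↔ ∃ r ∈ g.rules, r.input = A := by
  classical
  simp [nts, Finset.mem_image]

/-- Bound on lengths of right-hand sides. -/
def mBound (g : ContextFreeGrammar.{uT} T) : ℕ :=
  max 1 (g.rules.sup fun r => r.output.length)

lemma one_le_mBound : 1 ≤ mBound g := le_max_left _ _

lemma output_le_mBound {r : ContextFreeRule T g.NT} (hr : r ∈ g.rules) :
    r.output.length ≤ mBound g :=
  le_trans (Finset.le_sup (f := fun r => r.output.length) hr) (le_max_right _ _)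

lemma main_pump [DecidableEq g.NT] : ∀ (n : ℕ) {A : g.NT} {w : List T} (V : Finset g.NT), A ∉ V →
    DerivesIn g n [Symbol.nonterminal A] (mapT g w) →
    mBound g ^ (nts g \ V).card < w.length →
    (∃ B u x wB y v a b c, w = u ++ x ++ wB ++ y ++ v ∧ 1 ≤ b ∧ a + b + c ≤ n ∧
      Frame g A B a u v ∧ Frame g B B b x y ∧
      DerivesIn g c [Symbol.nonterminal B] (mapT g wB)) ∨
    (∃ B ∈ V, ∃ u v wB a c, 1 ≤ a ∧ a + c ≤ n ∧ w = u ++ wB ++ v ∧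
      Frame g A B a u v ∧ DerivesIn g c [Symbol.nonterminal B] (mapT g wB)) := by
  classical
  intro n
  induction n using Nat.strong_induction_on with
  | _ n IH =>
    intro A w V hAV h hlen
    obtain ⟨r, n', rfl, hrg, rfl, hder⟩ := h.head_nt
    set k := (nts g \ V).card with hk
    have hAnts : r.input ∈ nts g := mem_nts.mpr ⟨r, hrg, rfl⟩
    have hk1 : 1 ≤ k := by
      refine Finset.card_pos.mpr ⟨r.input, Finset.mem_sdiff.mpr ⟨hAnts, hAV⟩⟩
    have hp1 : 1 ≤ mBound g ^ (k - 1) := Nat.one_le_pow _ _ (by have := one_le_mBound (g := g); omega)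
    have hpow : mBound g ^ (k - 1) * mBound g = mBound g ^ k := by
      rw [← pow_succ]
      congr 1
      omega
    have hlen2 : r.output.length * mBound g ^ (k - 1) < w.length := by
      calc r.output.length * mBound g ^ (k - 1)
          ≤ mBound g * mBound g ^ (k - 1) := Nat.mul_le_mul_right _ (output_le_mBound hrg)
        _ = mBound g ^ k := by rw [Nat.mul_comm, hpow]
        _ < w.length := hlen
    obtain ⟨C, x, y, wC, a, c, hwdec, hbig, hac, dctx, dC⟩ :=
      find_big_piece r.output hp1 hder hlen2
    have frameAC : Frame g r.input C (a + 1) x y :=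
      DerivesIn.head ⟨r, hrg, ContextFreeRule.Rewrites.input_output⟩ dctx
    by_cases hCA : C = r.input
    · subst hCA
      exact Or.inl ⟨r.input, [], x, wC, y, [], 0, a + 1, c, by simpa using hwdec, by omega, by omega,
        Frame.refl _, frameAC, dC⟩
    · by_cases hCV : C ∈ V
      · exact Or.inr ⟨C, hCV, x, y, wC, a + 1, c, by omega, by omega, hwdec, frameAC, dC⟩
      · have hCV' : C ∉ insert r.input V := by simp [hCA, hCV]
        have hcard : (nts g \ insert r.input V).card = k - 1 := by
          rw [Finset.sdiff_insert]
          rw [Finset.card_erase_of_mem (Finset.mem_sdiff.mpr ⟨hAnts, hAV⟩)]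
        have hrec := IH c (by omega) (insert r.input V) hCV' dC (by rw [hcard]; exact hbig)
        rcases hrec with ⟨B, u', x', wB, y', v', a', b', c', hdecC, hb', habc', frCB, frBB, dB⟩ |
          ⟨B, hBV', u', v', wB, a', c', ha', hac', hdecC, frCB, dB⟩
        · refine Or.inl ⟨B, x ++ u', x', wB, y', v' ++ y, (a + 1) + a', b', c', ?_, hb',
            by omega, frameAC.comp frCB, frBB, dB⟩
          simp [hwdec, hdecC]
        · rcases Finset.mem_insert.mp hBV' with hBA | hBV
          · subst hBA
            refine Or.inl ⟨r.input, [], x ++ u', wB, v' ++ y, [], 0, (a + 1) + a', c', ?_, by omega,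
              by omega, Frame.refl _, frameAC.comp frCB, dB⟩
            simp [hwdec, hdecC]
          · refine Or.inr ⟨B, hBV, x ++ u', v' ++ y, wB, (a + 1) + a', c', by omega, by omega,
              ?_, frameAC.comp frCB, dB⟩
            simp [hwdec, hdecC]


/-- `rep x j` = `x` repeated `j` times. -/
def rep (x : List T) : ℕ → List T
  | 0 => []
  | j + 1 => x ++ rep x j

lemma rep_append_comm (x : List T) (j : ℕ) : rep x j ++ x = x ++ rep x j := by
  induction j with
  | zero => simp [rep]
  | succ j ih => simp only [rep, List.append_assoc, ih]

lemma pump_frame {B : g.NT} {b x y} (h : Frame g B B b x y) (j : ℕ) :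
    g.Derives [Symbol.nonterminal B]
      (mapT g (rep x j) ++ [Symbol.nonterminal B] ++ mapT g (rep y j)) := by
  induction j with
  | zero => simpa [rep, mapT] using Relation.ReflTransGen.refl
  | succ j ih =>
    have s2 := (h.derives.append_left (mapT g (rep x j))).append_right (mapT g (rep y j))
    have key : (mapT g (rep x j) ++ (mapT g x ++ [Symbol.nonterminal B] ++ mapT g y))
          ++ mapT g (rep y j)
        = mapT g (rep x (j + 1)) ++ [Symbol.nonterminal B] ++ mapT g (rep y (j + 1)) := by
      simp only [rep, mapT, List.map_append, List.append_assoc, ← List.map_append,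
        rep_append_comm]
      rw [← List.append_assoc, ← List.map_append, rep_append_comm, List.map_append,
        List.append_assoc]
    exact ih.trans (key ▸ s2)

theorem cfg_pump {w : List T} (hw : w ∈ g.language)
    (hlen : mBound g ^ (@Finset.card _ (nts g)) < w.length) :
    ∃ u x wB y v, w = u ++ x ++ wB ++ y ++ v ∧ x ++ y ≠ [] ∧
      ∀ j, u ++ rep x j ++ wB ++ rep y j ++ v ∈ g.language := by
  classical
  rw [mem_language_iff] at hw
  have hex : ∃ n, DerivesIn g n [Symbol.nonterminal g.initial] (mapT g w) :=
    derives_iff_derivesIn.mp hw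
  have h₀ := Nat.find_spec hex
  have hmain := main_pump (Nat.find hex) (∅ : Finset g.NT) (Finset.notMem_empty _) h₀
    (by simpa using hlen)
  rcases hmain with ⟨B, u, x, wB, y, v, a, b, c, hdec, hb, habc, frAB, frBB, dB⟩ |
    ⟨B, hB, -⟩
  · refine ⟨u, x, wB, y, v, hdec, ?_, ?_⟩
    · intro hxy
      obtain ⟨hx, hy⟩ := List.append_eq_nil_iff.mp hxy
      subst hx hy
      have d' := frAB.fill dB
      have hw' : u ++ wB ++ v = w := by simpa using hdec.symm
      rw [hw'] at d'
      exact Nat.find_min hex (by omega) d'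
    · intro j
      rw [mem_language_iff]
      have s1 : g.Derives [Symbol.nonterminal g.initial]
          (mapT g u ++ [Symbol.nonterminal B] ++ mapT g v) := frAB.derives
      have s2 := ((pump_frame frBB j).append_left (mapT g u)).append_right (mapT g v)
      have s3 := ((dB.derives.append_left
          (mapT g u ++ mapT g (rep x j))).append_right (mapT g (rep y j) ++ mapT g v))
      refine (s1.trans (by simpa [List.append_assoc] using s2)).trans ?_
      simpa [mapT, List.append_assoc] using s3
  · exact absurd hB (Finset.notMem_empty _)

end CFLPump


section L2Part
open CFLPump

def w3 (n : ℕ) : List (Fin 3) :=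
  List.replicate n 0 ++ List.replicate n 1 ++ List.replicate (2 * n) 2

lemma length_w3 (n : ℕ) : (w3 n).length = 4 * n := by
  simp [w3]; omega

lemma count0_w3 (n : ℕ) : List.count (0 : Fin 3) (w3 n) = n := by
  simp [w3, List.count_append, List.count_replicate]

lemma count1_w3 (n : ℕ) : List.count (1 : Fin 3) (w3 n) = n := by
  simp [w3, List.count_append, List.count_replicate]

lemma count2_w3 (n : ℕ) : List.count (2 : Fin 3) (w3 n) = 2 * n := by
  simp [w3, List.count_append, List.count_replicate]

lemma sorted_w3 (n : ℕ) : List.Pairwise (· ≤ ·) (w3 n) := by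
  unfold w3
  refine List.pairwise_append.mpr ⟨List.pairwise_append.mpr
    ⟨List.pairwise_replicate.mpr (Or.inr le_rfl),
     List.pairwise_replicate.mpr (Or.inr le_rfl), ?_⟩,
    List.pairwise_replicate.mpr (Or.inr le_rfl), ?_⟩
  · intro a ha b hb
    rw [List.eq_of_mem_replicate ha, List.eq_of_mem_replicate hb]
    decide
  · intro a _ b hb
    rw [List.eq_of_mem_replicate hb]
    exact Fin.le_def.mpr (by omega)

lemma count_rep {α : Type} [BEq α] (d : α) (x : List α) (j : ℕ) :
    List.count d (rep x j) = j * List.count d x := by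
  induction j with
  | zero => simp [rep]
  | succ j ih => simp [rep, List.count_append, ih]; ring

lemma exists_long {S : Set (List (Fin 3))} (hS : S.Infinite) (B : ℕ) :
    ∃ w ∈ S, B < w.length := by
  by_contra hcon
  push_neg at hcon
  exact hS (Set.Finite.subset (List.finite_length_le (Fin 3) B) (fun w hw => hcon w hw))

end L2Part


/-- L₂'' is CFL-immune. -/
theorem L2''_CFLImmune : CFLImmune L2'' := by
  open CFLPump in
  constructor
  · exact Set.infinite_of_injective_forall_mem (f := fun n : ℕ => w3 (n + 1))
      (fun m n hmn => by
        have := congrArg List.length hmn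
        simp only [length_w3] at this
        omega)
      (fun n => ⟨n + 1, by omega, rfl⟩)
  · rintro M hML hMinf ⟨g, hg⟩
    obtain ⟨w, hwM, hlen⟩ := exists_long hMinf (mBound g ^ (nts g).card)
    obtain ⟨u, x, wB, y, v, -, hxy, hpump⟩ := cfg_pump (hg ▸ hwM) hlen
    have hW : ∀ j, u ++ rep x j ++ wB ++ rep y j ++ v ∈ L2'' := fun j => hML (hg ▸ hpump j)
    obtain ⟨n0, hn0, h0⟩ := hW 0
    obtain ⟨n1, hn1, h1⟩ := hW 1
    obtain ⟨n2, hn2, h2⟩ := hW 2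
    have e : ∀ d : Fin 3, ∀ (j m : ℕ), (u ++ rep x j ++ wB ++ rep y j ++ v) = w3 m →
        List.count d u + List.count d wB + List.count d v
          + (j * List.count d x + j * List.count d y) = List.count d (w3 m) := by
      intro d j m hj
      have hc := congrArg (List.count d) hj
      simp only [List.count_append, count_rep] at hc
      omega
    have E00 := e 0 0 n0 h0
    have E10 := e 1 0 n0 h0
    have E20 := e 2 0 n0 h0
    have E01 := e 0 1 n1 h1
    have E11 := e 1 1 n1 h1
    have E21 := e 2 1 n1 h1
    rw [count0_w3] at E00 E01
    rw [count1_w3] at E10 E11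
    rw [count2_w3] at E20 E21
    have hfin3 : ∀ d : Fin 3, d = 0 ∨ d = 1 ∨ d = 2 := by decide
    have hpos : n0 < n1 := by
      by_contra hle
      push_neg at hle
      apply hxy
      refine List.eq_nil_iff_forall_not_mem.mpr ?_
      intro d hd
      have hcnt : List.count d (x ++ y) = 0 := by
        rw [List.count_append]
        rcases hfin3 d with rfl | rfl | rfl <;> omega
      exact (List.count_eq_zero.mp hcnt) hd
    have m0 : (0 : Fin 3) ∈ x ++ y := List.count_pos_iff.mp (by rw [List.count_append]; omega)
    have m1 : (1 : Fin 3) ∈ x ++ y := List.count_pos_iff.mp (by rw [List.count_append]; omega)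
    have m2 : (2 : Fin 3) ∈ x ++ y := List.count_pos_iff.mp (by rw [List.count_append]; omega)
    have hsort : List.Pairwise (· ≤ ·) (u ++ rep x 2 ++ wB ++ rep y 2 ++ v) := by
      rw [h2]; exact sorted_w3 n2
    have hxconst : ∀ a ∈ x, ∀ b ∈ x, a = b := by
      have hxx : List.Sublist (x ++ x) (u ++ rep x 2 ++ wB ++ rep y 2 ++ v) := by
        have hE : u ++ rep x 2 ++ wB ++ rep y 2 ++ v
            = u ++ (x ++ x) ++ (wB ++ rep y 2 ++ v) := by simp [rep]
        rw [hE]; exact (List.infix_append _ _ _).sublist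
      have hcross := (List.pairwise_append.mp (hsort.sublist hxx)).2.2
      exact fun a ha b hb => le_antisymm (hcross a ha b hb) (hcross b hb a ha)
    have hyconst : ∀ a ∈ y, ∀ b ∈ y, a = b := by
      have hyy : List.Sublist (y ++ y) (u ++ rep x 2 ++ wB ++ rep y 2 ++ v) := by
        have hE : u ++ rep x 2 ++ wB ++ rep y 2 ++ v
            = (u ++ rep x 2 ++ wB) ++ (y ++ y) ++ v := by simp [rep]
        rw [hE]; exact (List.infix_append _ _ _).sublist
      have hcross := (List.pairwise_append.mp (hsort.sublist hyy)).2.2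
      exact fun a ha b hb => le_antisymm (hcross a ha b hb) (hcross b hb a ha)
    rcases List.mem_append.mp m0 with h0' | h0' <;>
      rcases List.mem_append.mp m1 with h1' | h1' <;>
        rcases List.mem_append.mp m2 with h2' | h2' <;>
          first
            | exact absurd (hxconst _ h0' _ h1') (by decide)
            | exact absurd (hxconst _ h0' _ h2') (by decide)
            | exact absurd (hxconst _ h1' _ h2') (by decide)
            | exact absurd (hyconst _ h0' _ h1') (by decide)
            | exact absurd (hyconst _ h0' _ h2') (by decide)
            | exact absurd (hyconst _ h1' _ h2') (by decide)
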